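/- Let m ≥ 1 be an integer, p₀ ∈ (0, π/2), and let Λ > 0 be defined by cosh(2Λ) = 1/cos(p₀). Then 2^{m²} ∫_{[−Λ,Λ]^m} ( ∏_{m ≥ a > b ≥ 1} sinh²(λ_a − λ_b) ) / ( ∏_{a=1}^m cosh^m(2λ_a) ) dλ₁…dλ_m = 2^{m² − m} ∫_{[−p₀,p₀]^m} ∏_{m ≥ a > b ≥ 1} sin²( (p_a − p_b)/2 ) dp₁…dp_m. -/

import Mathlib

open Real MeasureTheory Finset

noncomputable def gg (p : ℝ) : ℝ := Real.arsinh (Real.tan p) / 2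

lemma two_gg (p : ℝ) : 2 * gg p = Real.arsinh (Real.tan p) := by unfold gg; ring

lemma sinh_two_gg (p : ℝ) : Real.sinh (2 * gg p) = Real.tan p := by
  rw [two_gg, Real.sinh_arsinh]

lemma cosh_two_gg {p : ℝ} (h : 0 < Real.cos p) :
    Real.cosh (2 * gg p) = (Real.cos p)⁻¹ := by
  rw [two_gg, Real.cosh_arsinh, ← Real.inv_sqrt_one_add_tan_sq h, inv_inv]

lemma hasDerivAt_gg {p : ℝ} (h : 0 < Real.cos p) :
    HasDerivAt gg ((2 * Real.cos p)⁻¹) p := by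
  have ht : HasDerivAt Real.tan (1 / Real.cos p ^ 2) p := Real.hasDerivAt_tan h.ne'
  have ha : HasDerivAt Real.arsinh (Real.sqrt (1 + Real.tan p ^ 2))⁻¹ (Real.tan p) :=
    Real.hasDerivAt_arsinh _
  have hcomp := (ha.comp p ht).div_const 2
  have heq : (Real.sqrt (1 + Real.tan p ^ 2))⁻¹ * (1 / Real.cos p ^ 2) / 2
      = (2 * Real.cos p)⁻¹ := by
    rw [Real.inv_sqrt_one_add_tan_sq h]
    field_simp
  rw [heq] at hcomp
  exact hcomp

lemma gg_neg (p : ℝ) : gg (-p) = - gg p := by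
  unfold gg; rw [Real.tan_neg, Real.arsinh_neg]; ring

lemma sinh_gg_sub {a b : ℝ} (ha : 0 < Real.cos a) (hb : 0 < Real.cos b) :
    Real.sinh (gg a - gg b) ^ 2
      = Real.sin ((a - b) / 2) ^ 2 / (Real.cos a * Real.cos b) := by
  have h1 : Real.cosh (2 * (gg a - gg b))
      = Real.cosh (2 * gg a) * Real.cosh (2 * gg b)
        - Real.sinh (2 * gg a) * Real.sinh (2 * gg b) := by
    rw [mul_sub]; exact Real.cosh_sub _ _
  have h2 : Real.cosh (2 * (gg a - gg b))
      = 2 * Real.sinh (gg a - gg b) ^ 2 + 1 := by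
    rw [Real.cosh_two_mul, Real.cosh_sq]; ring
  rw [cosh_two_gg ha, cosh_two_gg hb, sinh_two_gg, sinh_two_gg] at h1
  have h3 : Real.sin ((a - b) / 2) ^ 2 = 1 / 2 - Real.cos (a - b) / 2 := by
    have h4 : 2 * ((a - b) / 2) = a - b := by ring
    rw [Real.sin_sq_eq_half_sub, h4]
  have hsinh : Real.sinh (gg a - gg b) ^ 2
      = ((Real.cos a)⁻¹ * (Real.cos b)⁻¹ - Real.tan a * Real.tan b - 1) / 2 := by
    rw [h1] at h2; linarith
  rw [hsinh, h3, Real.cos_sub, Real.tan_eq_sin_div_cos, Real.tan_eq_sin_div_cos]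
  field_simp
  ring

lemma gg_eq_Lam {p₀ Λ : ℝ} (hp0 : 0 < p₀) (hp2 : p₀ < π / 2) (hΛ : 0 < Λ)
    (hcosh : Real.cosh (2 * Λ) = 1 / Real.cos p₀) : gg p₀ = Λ := by
  have hc : 0 < Real.cos p₀ := Real.cos_pos_of_mem_Ioo ⟨by linarith, hp2⟩
  have ht : 0 < Real.tan p₀ := Real.tan_pos_of_pos_of_lt_pi_div_two hp0 hp2
  have hs : 0 < Real.sinh (2 * Λ) := by rw [Real.sinh_pos_iff]; linarith
  have hsq : Real.sinh (2 * Λ) ^ 2 = Real.tan p₀ ^ 2 := by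
    rw [Real.sinh_sq, hcosh, Real.tan_eq_sin_div_cos, div_pow, div_pow, Real.sin_sq]
    field_simp
  have hfac : (Real.sinh (2 * Λ) - Real.tan p₀) * (Real.sinh (2 * Λ) + Real.tan p₀) = 0 := by
    nlinarith [hsq]
  have heq : Real.sinh (2 * Λ) = Real.tan p₀ := by
    rcases mul_eq_zero.1 hfac with h | h
    · linarith
    · linarith
  have := Real.sinh_injective (show Real.sinh (2 * gg p₀) = Real.sinh (2 * Λ) by
    rw [sinh_two_gg, heq])
  linarith

lemma gg_strictMonoOn {p₀ : ℝ} (hp2 : p₀ < π / 2) :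
    StrictMonoOn gg (Set.Icc (-p₀) p₀) := by
  intro x hx y hy hxy
  have h1 : x ∈ Set.Ioo (-(π / 2)) (π / 2) := ⟨by linarith [hx.1], by linarith [hx.2]⟩
  have h2 : y ∈ Set.Ioo (-(π / 2)) (π / 2) := ⟨by linarith [hy.1], by linarith [hy.2]⟩
  have := Real.arsinh_lt_arsinh.2 (Real.strictMonoOn_tan h1 h2 hxy)
  unfold gg
  linarith

lemma gg_image {p₀ Λ : ℝ} (hp0 : 0 < p₀) (hp2 : p₀ < π / 2) (hgΛ : gg p₀ = Λ) :
    gg '' Set.Icc (-p₀) p₀ = Set.Icc (-Λ) Λ := by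
  have hmono := gg_strictMonoOn hp2
  have hle : -p₀ ≤ p₀ := by linarith
  have hneg : gg (-p₀) = -Λ := by rw [gg_neg, hgΛ]
  have hcos : ∀ x ∈ Set.Icc (-p₀) p₀, 0 < Real.cos x := fun x hx =>
    Real.cos_pos_of_mem_Ioo ⟨by linarith [hx.1], by linarith [hx.2]⟩
  have hcont : ContinuousOn gg (Set.Icc (-p₀) p₀) := fun x hx =>
    ((hasDerivAt_gg (hcos x hx)).continuousAt).continuousWithinAt
  apply Set.Subset.antisymm
  · rintro _ ⟨x, hx, rfl⟩
    exact ⟨hneg ▸ hmono.monotoneOn (Set.left_mem_Icc.2 hle) hx hx.1,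
      hgΛ ▸ hmono.monotoneOn hx (Set.right_mem_Icc.2 hle) hx.2⟩
  · have := intermediate_value_Icc hle hcont
    rw [hneg, hgΛ] at this
    exact this

lemma det_pi_smul {m : ℕ} (d : Fin m → ℝ) :
    (ContinuousLinearMap.pi fun i =>
      d i • ContinuousLinearMap.proj (R := ℝ) (φ := fun _ : Fin m => ℝ) i).det
      = ∏ i, d i := by
  have h : ((ContinuousLinearMap.pi fun i =>
      d i • ContinuousLinearMap.proj (R := ℝ) (φ := fun _ : Fin m => ℝ) i) :
        (Fin m → ℝ) →ₗ[ℝ] (Fin m → ℝ))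
      = Matrix.toLin' (Matrix.diagonal d) := by
    apply LinearMap.ext
    intro v
    funext j
    simp [Matrix.toLin'_apply, Matrix.mulVec_diagonal]
  have : (ContinuousLinearMap.pi fun i =>
      d i • ContinuousLinearMap.proj (R := ℝ) (φ := fun _ : Fin m => ℝ) i).det
      = LinearMap.det (Matrix.toLin' (Matrix.diagonal d)) := by
    rw [ContinuousLinearMap.det, h]
  rw [this, LinearMap.det_toLin', Matrix.det_diagonal]

lemma prod_pair {m : ℕ} (c : Fin m → ℝ) :
    ∏ a : Fin m, ∏ b ∈ Finset.univ.filter (fun b => b < a), (c a * c b)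
      = ∏ a : Fin m, c a ^ (m - 1) := by
  have h1 : ∀ a : Fin m, (Finset.univ.filter (fun b => b < a)) = Finset.Iio a := by
    intro a; ext b; simp
  have h2 : ∀ b : Fin m, (Finset.univ.filter (fun a => b < a)) = Finset.Ioi b := by
    intro b; ext a; simp
  calc ∏ a : Fin m, ∏ b ∈ Finset.univ.filter (fun b => b < a), (c a * c b)
      = ∏ a : Fin m, (c a ^ (a : ℕ) *
          ∏ b ∈ Finset.univ.filter (fun b => b < a), c b) := by
        refine Finset.prod_congr rfl fun a _ => ?_
        rw [Finset.prod_mul_distrib, Finset.prod_const, h1, Fin.card_Iio]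
    _ = (∏ a : Fin m, c a ^ (a : ℕ)) *
          ∏ a : Fin m, ∏ b ∈ Finset.univ.filter (fun b => b < a), c b :=
        Finset.prod_mul_distrib
    _ = (∏ a : Fin m, c a ^ (a : ℕ)) *
          ∏ b : Fin m, ∏ a ∈ Finset.univ.filter (fun a => b < a), c b := by
        rw [Finset.prod_comm' (t' := (Finset.univ : Finset (Fin m)))
          (s' := fun b => Finset.univ.filter (fun a => b < a)) (fun x y => by simp)]
    _ = (∏ a : Fin m, c a ^ (a : ℕ)) * ∏ b : Fin m, c b ^ (m - 1 - (b : ℕ)) := by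
        refine congrArg _ (Finset.prod_congr rfl fun b _ => ?_)
        rw [Finset.prod_const, h2, Fin.card_Ioi]
    _ = ∏ a : Fin m, c a ^ (m - 1) := by
        rw [← Finset.prod_mul_distrib]
        refine Finset.prod_congr rfl fun a _ => ?_
        rw [← pow_add]
        congr 1
        have := a.isLt
        omega

/-- Change of variables `cosh 2λ = 1/cos p` in the multiple-integral representation of the
emptiness formation probability of the XX chain. -/
theorem stmt5 (m : ℕ) (hm : 1 ≤ m) (p₀ : ℝ) (hp₀ : p₀ ∈ Set.Ioo 0 (π / 2))
    (Λ : ℝ) (hΛ : 0 < Λ) (hcosh : Real.cosh (2 * Λ) = 1 / Real.cos p₀) :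
    (2 : ℝ) ^ (m ^ 2) *
      ∫ x : Fin m → ℝ in Set.univ.pi (fun _ => Set.Icc (-Λ) Λ),
        (∏ a : Fin m, ∏ b ∈ Finset.univ.filter (fun b => b < a),
            Real.sinh (x a - x b) ^ 2) /
          ∏ a : Fin m, Real.cosh (2 * x a) ^ m =
    (2 : ℝ) ^ (m ^ 2 - m) *
      ∫ p : Fin m → ℝ in Set.univ.pi (fun _ => Set.Icc (-p₀) p₀),
        ∏ a : Fin m, ∏ b ∈ Finset.univ.filter (fun b => b < a),
          Real.sin ((p a - p b) / 2) ^ 2 := by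
  obtain ⟨hp0, hp2⟩ := hp₀
  set s : Set (Fin m → ℝ) := Set.univ.pi (fun _ => Set.Icc (-p₀) p₀) with hs_def
  have hs : MeasurableSet s := MeasurableSet.univ_pi (fun _ => measurableSet_Icc)
  have hgΛ : gg p₀ = Λ := gg_eq_Lam hp0 hp2 hΛ hcosh
  have hcos : ∀ x ∈ Set.Icc (-p₀) p₀, 0 < Real.cos x := fun x hx =>
    Real.cos_pos_of_mem_Ioo ⟨by linarith [hx.1], by linarith [hx.2]⟩
  set F : (Fin m → ℝ) → ℝ := fun x =>
    (∏ a : Fin m, ∏ b ∈ Finset.univ.filter (fun b => b < a),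
        Real.sinh (x a - x b) ^ 2) / ∏ a : Fin m, Real.cosh (2 * x a) ^ m with hF_def
  -- the image of s under the coordinatewise map
  have himg : (fun (p : Fin m → ℝ) (i : Fin m) => gg (p i)) '' s
      = Set.univ.pi (fun _ => Set.Icc (-Λ) Λ) := by
    have h := Set.piMap_image_univ_pi (fun _ : Fin m => gg)
      (fun _ => Set.Icc (-p₀) p₀)
    rw [hs_def]
    rw [show (fun (p : Fin m → ℝ) (i : Fin m) => gg (p i))
        = Pi.map (fun _ : Fin m => gg) from rfl, h]
    simp only [gg_image hp0 hp2 hgΛ]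
  -- the derivative
  set D : (Fin m → ℝ) → ((Fin m → ℝ) →L[ℝ] (Fin m → ℝ)) := fun x =>
    ContinuousLinearMap.pi fun i =>
      (2 * Real.cos (x i))⁻¹ • ContinuousLinearMap.proj i with hD_def
  have hD : ∀ x ∈ s, HasFDerivWithinAt (fun (p : Fin m → ℝ) (i : Fin m) => gg (p i))
      (D x) s x := by
    intro x hx
    apply HasFDerivAt.hasFDerivWithinAt
    apply hasFDerivAt_pi.2
    intro i
    exact (hasDerivAt_gg (hcos _ (hx i (Set.mem_univ i)))).comp_hasFDerivAt
      (f := fun f : Fin m → ℝ => f i) x (hasFDerivAt_apply i x)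
  have hinj : Set.InjOn (fun (p : Fin m → ℝ) (i : Fin m) => gg (p i)) s := by
    intro p hp q hq h
    funext i
    exact (gg_strictMonoOn hp2).injOn (hp i (Set.mem_univ i)) (hq i (Set.mem_univ i))
      (congrFun h i)
  have hchg := integral_image_eq_integral_abs_det_fderiv_smul volume hs hD hinj F
  rw [himg] at hchg
  rw [show (∫ x : Fin m → ℝ in Set.univ.pi (fun _ => Set.Icc (-Λ) Λ),
      (∏ a : Fin m, ∏ b ∈ Finset.univ.filter (fun b => b < a),
          Real.sinh (x a - x b) ^ 2) / ∏ a : Fin m, Real.cosh (2 * x a) ^ m)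
      = ∫ x : Fin m → ℝ in Set.univ.pi (fun _ => Set.Icc (-Λ) Λ), F x from rfl, hchg]
  -- pointwise simplification of the integrand
  have hpt : Set.EqOn (fun p => |(D p).det| • F (fun i => gg (p i)))
      (fun p => ((2 : ℝ) ^ m)⁻¹ *
        ∏ a : Fin m, ∏ b ∈ Finset.univ.filter (fun b => b < a),
          Real.sin ((p a - p b) / 2) ^ 2) s := by
    intro p hp
    have hc : ∀ i, 0 < Real.cos (p i) := fun i => hcos _ (hp i (Set.mem_univ i))
    have hdet : (D p).det = ∏ i, (2 * Real.cos (p i))⁻¹ := det_pi_smul _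
    have hdpos : 0 < ∏ i, (2 * Real.cos (p i))⁻¹ :=
      Finset.prod_pos fun i _ => inv_pos.2 (by linarith [hc i])
    have hnum : (∏ a : Fin m, ∏ b ∈ Finset.univ.filter (fun b => b < a),
        Real.sinh (gg (p a) - gg (p b)) ^ 2)
        = (∏ a : Fin m, ∏ b ∈ Finset.univ.filter (fun b => b < a),
            Real.sin ((p a - p b) / 2) ^ 2) /
          (∏ a : Fin m, Real.cos (p a) ^ (m - 1)) := by
      rw [← prod_pair (fun a => Real.cos (p a)), ← Finset.prod_div_distrib]
      refine Finset.prod_congr rfl fun a _ => ?_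
      rw [← Finset.prod_div_distrib]
      exact Finset.prod_congr rfl fun b _ => sinh_gg_sub (hc a) (hc b)
    have hden : (∏ a : Fin m, Real.cosh (2 * gg (p a)) ^ m)
        = ((∏ a : Fin m, Real.cos (p a) ^ (m - 1)) * ∏ a : Fin m, Real.cos (p a))⁻¹ := by
      rw [← Finset.prod_mul_distrib, ← Finset.prod_inv_distrib]
      refine Finset.prod_congr rfl fun a _ => ?_
      rw [cosh_two_gg (hc a), inv_pow, ← pow_succ]
      congr 2
      omega
    have habs : |(D p).det| = ∏ i, (2 * Real.cos (p i))⁻¹ := by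
      rw [hdet, abs_of_pos hdpos]
    have hP : (0 : ℝ) < ∏ a : Fin m, Real.cos (p a) ^ (m - 1) :=
      Finset.prod_pos fun a _ => pow_pos (hc a) _
    have hC : (0 : ℝ) < ∏ a : Fin m, Real.cos (p a) :=
      Finset.prod_pos fun a _ => hc a
    have hprod2 : (∏ i : Fin m, (2 * Real.cos (p i))⁻¹)
        = ((2 : ℝ) ^ m * ∏ i : Fin m, Real.cos (p i))⁻¹ := by
      rw [show (∏ i : Fin m, (2 * Real.cos (p i))⁻¹)
          = (∏ i : Fin m, (2 * Real.cos (p i)))⁻¹ by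
        rw [Finset.prod_inv_distrib]]
      congr 1
      rw [Finset.prod_mul_distrib, Finset.prod_const]
      congr 1
      simp
    show |(D p).det| • F (fun i => gg (p i)) = _
    rw [smul_eq_mul, habs, hprod2, hF_def]
    beta_reduce
    rw [hnum, hden]
    have h2m : (0 : ℝ) < (2 : ℝ) ^ m := by positivity
    field_simp
  rw [setIntegral_congr_fun hs hpt, integral_const_mul]
  rw [pow_sub₀ (2 : ℝ) two_ne_zero (Nat.le_self_pow two_ne_zero m)]
  have h2m : ((2 : ℝ) ^ m) ≠ 0 := by positivity
  field_simp
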